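/- Let (S(t)) be a C₀-semigroup on H and let Q be a bounded self-adjoint nonnegative operator satisfying Hypothesis H, and let R be the unique bounded self-adjoint nonnegative operator with R² = Q∞. Then: (a) if x ∈ H satisfies S(t)Rx = Rx for all t ≥ 0, then x = 0; (b) if x ∈ H satisfies S(t)*x = x for all t ≥ 0, then x = 0 (in particular the kernel of A* is trivial, where A is the generator of (S(t))). -/

import Mathlib

/-!
STATEMENT 4.  Let (S(t)) be a C₀-semigroup on a separable real Hilbert space H and Q a
bounded self-adjoint nonnegative operator (with square root Q^{1/2}) satisfying
Hypothesis H (∫₀^∞ Σ_i |Q^{1/2}S(s)*e_i|² ds < ∞ for an orthonormal basis (e_i), and the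
bounded operator Q∞x = ∫₀^∞ S(s)QS(s)*x ds is injective).  Let R be the unique bounded
self-adjoint nonnegative operator with R² = Q∞.  Then:
(a) if x ∈ H satisfies S(t)Rx = Rx for all t ≥ 0, then x = 0;
(b) if x ∈ H satisfies S(t)*x = x for all t ≥ 0, then x = 0
(in particular ker(A₀) = {0} and ker(A*) = {0}).
-/

open MeasureTheory Filter Set ContinuousLinearMap
open scoped RealInnerProductSpace ENNReal

noncomputable section

variable {H : Type*} [NormedAddCommGroup H] [InnerProductSpace ℝ H] [CompleteSpace H]

/-- Hilbert–Schmidt bound: `‖T z‖² ≤ ‖z‖² * ∑ᵢ ‖T eᵢ‖²`. -/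
lemma aux_hs_bound {ι : Type*} (b : HilbertBasis ι ℝ H) (T : H →L[ℝ] H) (z : H) :
    (‖T z‖₊ : ℝ≥0∞) ^ 2 ≤ (‖z‖₊ : ℝ≥0∞) ^ 2 * ∑' i, (‖T (b i)‖₊ : ℝ≥0∞) ^ 2 := by
  rcases eq_or_ne (T z) 0 with hTz | hTz
  · simp [hTz]
  have hz : z ≠ 0 := by rintro rfl; simp at hTz
  have hTzn : (0:ℝ) < ‖T z‖ := norm_pos_iff.mpr hTz
  have hzn : (0:ℝ) < ‖z‖ := norm_pos_iff.mpr hz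
  set u : H := ‖T z‖⁻¹ • T z with hu
  set v : H := adjoint T u with hv
  -- Parseval for v
  have hsum : HasSum (fun i => ⟪b i, v⟫ ^ 2) (‖v‖ ^ 2) := by
    have h := b.hasSum_inner_mul_inner v v
    have h2 : ⟪v, v⟫ = ‖v‖ ^ 2 := real_inner_self_eq_norm_sq v
    rw [h2] at h
    have hf : (fun i => ⟪b i, v⟫ ^ 2) = fun i => ⟪v, b i⟫ * ⟪b i, v⟫ :=
      funext fun i => by rw [sq, real_inner_comm]
    rw [hf]; exact h
  -- each coefficient
  have hcoef : ∀ i, ⟪b i, v⟫ ^ 2 ≤ ‖T (b i)‖ ^ 2 := by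
    intro i
    have h1 : ⟪b i, v⟫ = ⟪T (b i), u⟫ := adjoint_inner_right T (b i) u
    have hnu : ‖u‖ ≤ 1 := by
      rw [hu, norm_smul, norm_inv, Real.norm_eq_abs, abs_of_pos hTzn,
        inv_mul_cancel₀ hTzn.ne']
    have := abs_real_inner_le_norm (T (b i)) u
    have h2 : |⟪T (b i), u⟫| ≤ ‖T (b i)‖ := by
      calc |⟪T (b i), u⟫| ≤ ‖T (b i)‖ * ‖u‖ := this
        _ ≤ ‖T (b i)‖ * 1 := by gcongr
        _ = ‖T (b i)‖ := mul_one _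
    rw [h1]
    calc ⟪T (b i), u⟫ ^ 2 = |⟪T (b i), u⟫| ^ 2 := (sq_abs _).symm
      _ ≤ ‖T (b i)‖ ^ 2 := by gcongr
  -- lower bound on ‖v‖
  have hvz : ⟪v, z⟫ = ‖T z‖ := by
    rw [hv, adjoint_inner_left, hu, real_inner_smul_left, real_inner_self_eq_norm_sq, sq]
    field_simp
  have hvn : ‖T z‖ / ‖z‖ ≤ ‖v‖ := by
    rw [div_le_iff₀ hzn]
    calc ‖T z‖ = ⟪v, z⟫ := hvz.symm
      _ ≤ |⟪v, z⟫| := le_abs_self _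
      _ ≤ ‖v‖ * ‖z‖ := abs_real_inner_le_norm v z
  -- put things together in ℝ≥0∞
  have key : ENNReal.ofReal ((‖T z‖ / ‖z‖) ^ 2) ≤ ∑' i, (‖T (b i)‖₊ : ℝ≥0∞) ^ 2 := by
    calc ENNReal.ofReal ((‖T z‖ / ‖z‖) ^ 2)
        ≤ ENNReal.ofReal (‖v‖ ^ 2) := by
          apply ENNReal.ofReal_le_ofReal; gcongr
      _ = ∑' i, ENNReal.ofReal (⟪b i, v⟫ ^ 2) := by
          rw [← hsum.tsum_eq]
          exact ENNReal.ofReal_tsum_of_nonneg (fun i => sq_nonneg _) hsum.summable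
      _ ≤ ∑' i, (‖T (b i)‖₊ : ℝ≥0∞) ^ 2 := by
          apply ENNReal.tsum_le_tsum
          intro i
          have : ((‖T (b i)‖₊ : ℝ≥0∞)) ^ 2 = ENNReal.ofReal (‖T (b i)‖ ^ 2) := by
            rw [ENNReal.ofReal_pow (norm_nonneg _), ofReal_norm, enorm_eq_nnnorm]
          rw [this]
          exact ENNReal.ofReal_le_ofReal (hcoef i)
  have hzz : ((‖z‖₊ : ℝ≥0∞)) ^ 2 = ENNReal.ofReal (‖z‖ ^ 2) := by
    rw [ENNReal.ofReal_pow (norm_nonneg _), ofReal_norm, enorm_eq_nnnorm]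
  have hTzz : ((‖T z‖₊ : ℝ≥0∞)) ^ 2 = ENNReal.ofReal (‖T z‖ ^ 2) := by
    rw [ENNReal.ofReal_pow (norm_nonneg _), ofReal_norm, enorm_eq_nnnorm]
  calc (‖T z‖₊ : ℝ≥0∞) ^ 2 = ENNReal.ofReal (‖z‖ ^ 2 * (‖T z‖ / ‖z‖) ^ 2) := by
        rw [hTzz]; congr 1; field_simp
    _ = ENNReal.ofReal (‖z‖ ^ 2) * ENNReal.ofReal ((‖T z‖ / ‖z‖) ^ 2) :=
        ENNReal.ofReal_mul (by positivity)
    _ ≤ (‖z‖₊ : ℝ≥0∞) ^ 2 * ∑' i, (‖T (b i)‖₊ : ℝ≥0∞) ^ 2 := by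
        rw [hzz]; exact mul_le_mul_right key _

/-- translation of the lintegral on `Ioi`. -/
lemma aux_translate (g : ℝ → ℝ≥0∞) (t : ℝ) :
    ∫⁻ s in Ioi (0:ℝ), g (t + s) = ∫⁻ u in Ioi t, g u := by
  set e : ℝ ≃ᵐ ℝ := MeasurableEquiv.addLeft t with he
  have hcoe : ∀ s : ℝ, e s = t + s := fun s => rfl
  have hmapvol : Measure.map (⇑e) volume = volume := by
    have : ⇑e = (t + ·) := funext hcoe
    rw [this]
    exact MeasureTheory.map_add_left_eq_self volume t
  have hpre : (⇑e) ⁻¹' (Ioi t) = Ioi (0:ℝ) := by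
    ext s
    simp only [mem_preimage, hcoe, mem_Ioi]
    constructor <;> intro h <;> linarith
  have hmap : Measure.map (⇑e) (volume.restrict (Ioi (0:ℝ))) = volume.restrict (Ioi t) := by
    rw [← hpre, ← Measure.restrict_map e.measurable measurableSet_Ioi, hmapvol]
  calc ∫⁻ s in Ioi (0:ℝ), g (t + s)
      = ∫⁻ s, g (e s) ∂(volume.restrict (Ioi (0:ℝ))) := by
        simp only [hcoe]
    _ = ∫⁻ u, g u ∂(Measure.map (⇑e) (volume.restrict (Ioi (0:ℝ)))) :=
        (lintegral_map_equiv g e).symm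
    _ = ∫⁻ u in Ioi t, g u := by rw [hmap]

lemma aux_decomp_split (g : ℝ → ℝ≥0∞) (n : ℕ) :
    ∫⁻ s in Ioi ((n:ℝ)), g s
      = (∫⁻ s in Ioc ((n:ℝ)) ((n:ℝ)+1), g s) + ∫⁻ s in Ioi ((n:ℝ)+1), g s := by
  rw [← lintegral_add_measure, ← Measure.restrict_union
    (Set.Ioc_disjoint_Ioi le_rfl) measurableSet_Ioi,
    Set.Ioc_union_Ioi_eq_Ioi (by linarith : (n:ℝ) ≤ (n:ℝ)+1)]

lemma aux_tail (g : ℝ → ℝ≥0∞) (hg : ∫⁻ s in Ioi (0:ℝ), g s ≠ ⊤) (c : ℝ≥0∞) (hc : c ≠ 0)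
    (h : ∀ n : ℕ, c ≤ ∫⁻ s in Ioi ((n:ℝ)), g s) : False := by
  set b : ℕ → ℝ≥0∞ := fun n => ∫⁻ s in Ioc ((n:ℝ)) ((n:ℝ)+1), g s with hb
  set t : ℕ → ℝ≥0∞ := fun n => ∫⁻ s in Ioi ((n:ℝ)), g s with ht
  have hsplit : ∀ n, t n = b n + t (n+1) := by
    intro n
    have := aux_decomp_split g n
    simpa [hb, ht, Nat.cast_add, Nat.cast_one] using this
  have hpartial : ∀ N, t 0 = (∑ m ∈ Finset.range N, b m) + t N := by
    intro N
    induction N with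
    | zero => simp
    | succ N ih => rw [ih, hsplit N, Finset.sum_range_succ]; ring
  -- countable additivity: t 0 = ∑' b
  have hcover : (⋃ n : ℕ, Ioc ((n:ℝ)) ((n:ℝ)+1)) = Ioi (0:ℝ) := by
    ext x
    simp only [mem_iUnion, mem_Ioc, mem_Ioi]
    constructor
    · rintro ⟨n, hn1, _⟩
      have : (0:ℝ) ≤ (n:ℝ) := Nat.cast_nonneg n
      linarith
    · intro hx
      have h1 : 1 ≤ ⌈x⌉₊ := Nat.one_le_ceil_iff.mpr hx
      have hcast : ((⌈x⌉₊ - 1 : ℕ) : ℝ) = (⌈x⌉₊ : ℝ) - 1 := by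
        push_cast [h1]; ring
      refine ⟨⌈x⌉₊ - 1, ?_, ?_⟩
      · have h2 : (⌈x⌉₊ : ℝ) < x + 1 := Nat.ceil_lt_add_one hx.le
        rw [hcast]; linarith
      · have h3 : x ≤ (⌈x⌉₊ : ℝ) := Nat.le_ceil x
        rw [hcast]; linarith
  have htotal : t 0 = ∑' n, b n := by
    have hdisj : Pairwise (Function.onFun Disjoint fun n : ℕ => Ioc ((n:ℝ)) ((n:ℝ)+1)) := by
      intro m n hmn
      simp only [Function.onFun]
      rw [Set.Ioc_disjoint_Ioc]
      rcases hmn.lt_or_gt with h' | h'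
      · have : (m:ℝ) + 1 ≤ (n:ℝ) := by exact_mod_cast h'
        calc min ((m:ℝ)+1) ((n:ℝ)+1) ≤ (m:ℝ)+1 := min_le_left _ _
          _ ≤ (n:ℝ) := this
          _ ≤ max (m:ℝ) (n:ℝ) := le_max_right _ _
      · have : (n:ℝ) + 1 ≤ (m:ℝ) := by exact_mod_cast h'
        calc min ((m:ℝ)+1) ((n:ℝ)+1) ≤ (n:ℝ)+1 := min_le_right _ _
          _ ≤ (m:ℝ) := this
          _ ≤ max (m:ℝ) (n:ℝ) := le_max_left _ _
    have : volume.restrict (Ioi (0:ℝ))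
        = Measure.sum (fun n : ℕ => volume.restrict (Ioc ((n:ℝ)) ((n:ℝ)+1))) := by
      rw [← hcover]
      exact Measure.restrict_iUnion hdisj (fun n => measurableSet_Ioc)
    simp only [ht, hb]
    rw [show (((0:ℕ):ℝ)) = (0:ℝ) by norm_num, this, lintegral_sum_measure]
  -- partial sums tend to the total
  have htend : Tendsto (fun N => (∑ m ∈ Finset.range N, b m) + c) atTop
      (nhds ((∑' n, b n) + c)) :=
    (ENNReal.tendsto_nat_tsum b).add tendsto_const_nhds
  have hle : (∑' n, b n) + c ≤ t 0 := by
    apply le_of_tendsto htend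
    filter_upwards with N
    rw [hpartial N]
    exact add_le_add_right (h N) _
  rw [htotal] at hle
  have ht0 : (∑' n, b n) ≠ ⊤ := by
    rw [← htotal]; simp only [ht, Nat.cast_zero]; exact hg
  have : c ≤ 0 := by
    have h2 : (∑' n, b n) + c ≤ (∑' n, b n) + 0 := by simpa using hle
    exact (ENNReal.add_le_add_iff_left ht0).mp h2
  exact hc (le_antisymm this zero_le)

theorem statement4 {ι : Type*}
    (S : ℝ → H →L[ℝ] H)
    (hS0 : S 0 = 1)
    (hSadd : ∀ s t : ℝ, 0 ≤ s → 0 ≤ t → S (s + t) = (S s).comp (S t))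
    (hScont : ∀ x : H, ContinuousOn (fun t => S t x) (Set.Ici 0))
    (Q sqrtQ : H →L[ℝ] H) (hQsa : IsSelfAdjoint Q) (hQnn : ∀ x : H, 0 ≤ ⟪Q x, x⟫)
    (hsqrt_sa : IsSelfAdjoint sqrtQ) (hsqrt_nn : ∀ x : H, 0 ≤ ⟪sqrtQ x, x⟫)
    (hsqrt_sq : sqrtQ.comp sqrtQ = Q)
    -- (e_i) is an orthonormal basis of H
    (e : ι → H) (he : Orthonormal ℝ e)
    (he_tot : Dense ((Submodule.span ℝ (Set.range e) : Submodule ℝ H) : Set H))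
    -- Hypothesis H, part 1: ∫₀^∞ Σ_i |Q^{1/2}S(s)*e_i|² ds < ∞
    (hint : (∫⁻ s in Set.Ioi (0:ℝ),
        ∑' i : ι, (‖sqrtQ (ContinuousLinearMap.adjoint (S s) (e i))‖₊ : ℝ≥0∞) ^ 2) < ⊤)
    -- Hypothesis H, part 2: Q∞ is injective
    (hQinf_inj : Function.Injective (fun x : H =>
      ∫ s in Set.Ioi (0:ℝ), S s (Q (ContinuousLinearMap.adjoint (S s) x))))
    -- R is the (unique) bounded self-adjoint nonnegative operator with R² = Q∞
    (R : H →L[ℝ] H) (hRsa : IsSelfAdjoint R) (hRnn : ∀ x : H, 0 ≤ ⟪R x, x⟫)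
    (hR2 : ∀ x : H,
      R (R x) = ∫ s in Set.Ioi (0:ℝ), S s (Q (ContinuousLinearMap.adjoint (S s) x))) :
    (∀ x : H, (∀ t : ℝ, 0 ≤ t → S t (R x) = R x) → x = 0) ∧
      (∀ x : H, (∀ t : ℝ, 0 ≤ t → ContinuousLinearMap.adjoint (S t) x = x) → x = 0) := by
  classical
  -- the Hilbert basis
  have hsp : ⊤ ≤ (Submodule.span ℝ (Set.range e)).topologicalClosure := by
    intro x _
    have hx := he_tot x
    rwa [← Submodule.topologicalClosure_coe] at hx
  set b : HilbertBasis ι ℝ H := HilbertBasis.mk he hsp with hbdef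
  have hbe : ∀ i, b i = e i := fun i => congrFun (HilbertBasis.coe_mk he hsp) i
  set g : ℝ → ℝ≥0∞ :=
    fun s => ∑' i : ι, (‖sqrtQ (ContinuousLinearMap.adjoint (S s) (e i))‖₊ : ℝ≥0∞) ^ 2 with hgdef
  have hintg : (∫⁻ s in Set.Ioi (0:ℝ), g s) < ⊤ := hint
  -- the Hilbert-Schmidt bound in terms of `e`
  have HS : ∀ (T : H →L[ℝ] H) (z : H),
      (‖T z‖₊ : ℝ≥0∞) ^ 2 ≤ (‖z‖₊ : ℝ≥0∞) ^ 2 * ∑' i, (‖T (e i)‖₊ : ℝ≥0∞) ^ 2 := by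
    intro T z
    have h := aux_hs_bound b T z
    simpa only [hbe] using h
  -- injectivity helper
  have hinj0 : ∀ y : H,
      (∫ s in Set.Ioi (0:ℝ), S s (Q (ContinuousLinearMap.adjoint (S s) y))) = 0 → y = 0 := by
    intro y hy
    apply hQinf_inj (a₁ := y) (a₂ := 0)
    simp only [hy, map_zero, integral_zero]
  -- pointwise identity for the inner product with the integrand
  have hpt : ∀ (s : ℝ) (w : H), ⟪S s (Q (ContinuousLinearMap.adjoint (S s) w)), w⟫
      = ‖sqrtQ (ContinuousLinearMap.adjoint (S s) w)‖ ^ 2 := by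
    intro s w
    set v := ContinuousLinearMap.adjoint (S s) w with hv
    rw [← ContinuousLinearMap.adjoint_inner_right (S s) (Q v) w, ← hv, ← hsqrt_sq]
    simp only [ContinuousLinearMap.comp_apply]
    calc ⟪sqrtQ (sqrtQ v), v⟫
        = ⟪ContinuousLinearMap.adjoint sqrtQ (sqrtQ v), v⟫ := by rw [hsqrt_sa.adjoint_eq]
      _ = ⟪sqrtQ v, sqrtQ v⟫ := ContinuousLinearMap.adjoint_inner_left sqrtQ v (sqrtQ v)
      _ = ‖sqrtQ v‖ ^ 2 := real_inner_self_eq_norm_sq _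
  constructor
  · -- part (a)
    intro x hx
    suffices hz : R x = 0 by
      apply hinj0 x
      rw [← hR2 x, hz, map_zero]
    by_contra hzne
    set z : H := R x with hzdef
    have hxne : x ≠ 0 := by
      rintro rfl
      exact hzne (by simp [hzdef])
    have hzn : (0:ℝ) < ‖z‖ := norm_pos_iff.mpr hzne
    have hxn : (0:ℝ) < ‖x‖ := norm_pos_iff.mpr hxne
    set c : ℝ≥0∞ := ENNReal.ofReal (‖z‖ ^ 2 / ‖x‖ ^ 2) with hc
    have hcne : c ≠ 0 := by
      rw [hc, ← ENNReal.ofReal_zero, Ne, ENNReal.ofReal_eq_ofReal_iff (by positivity) le_rfl]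
      positivity
    refine aux_tail g hintg.ne c hcne ?_
    intro n
    set w : H := ContinuousLinearMap.adjoint (S (n:ℝ)) z with hw
    -- step 1 : ‖z‖² ≤ ‖x‖ * ‖R w‖
    have hstep1 : ‖z‖ ^ 2 ≤ ‖x‖ * ‖R w‖ := by
      have h1 : ⟪z, z⟫ = ⟪x, R w⟫ := by
        calc ⟪z, z⟫ = ⟪S (n:ℝ) z, z⟫ := by rw [hx (n:ℝ) (Nat.cast_nonneg n)]
          _ = ⟪z, w⟫ := (ContinuousLinearMap.adjoint_inner_right (S (n:ℝ)) z z).symm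
          _ = ⟪ContinuousLinearMap.adjoint R x, w⟫ := by rw [hRsa.adjoint_eq]
          _ = ⟪x, R w⟫ := ContinuousLinearMap.adjoint_inner_left R w x
      calc ‖z‖ ^ 2 = ⟪z, z⟫ := (real_inner_self_eq_norm_sq z).symm
        _ = ⟪x, R w⟫ := h1
        _ ≤ |⟪x, R w⟫| := le_abs_self _
        _ ≤ ‖x‖ * ‖R w‖ := abs_real_inner_le_norm x (R w)
    -- step 2 : ‖R w‖² = ⟪∫ F, w⟫
    have hstep2 : ‖R w‖ ^ 2
        = ⟪(∫ s in Set.Ioi (0:ℝ), S s (Q (ContinuousLinearMap.adjoint (S s) w))), w⟫ := by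
      calc ‖R w‖ ^ 2 = ⟪R w, R w⟫ := (real_inner_self_eq_norm_sq _).symm
        _ = ⟪ContinuousLinearMap.adjoint R (R w), w⟫ :=
            (ContinuousLinearMap.adjoint_inner_left R w (R w)).symm
        _ = ⟪R (R w), w⟫ := by rw [hRsa.adjoint_eq]
        _ = _ := by rw [hR2 w]
    -- tail of the integral
    have htail_ne : (∫⁻ u in Set.Ioi ((n:ℝ)), g u) ≠ ⊤ := by
      refine (lt_of_le_of_lt ?_ hintg).ne
      exact lintegral_mono'
        (Measure.restrict_mono (Set.Ioi_subset_Ioi (Nat.cast_nonneg n)) le_rfl) le_rfl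
    by_cases hInt : IntegrableOn
        (fun s => S s (Q (ContinuousLinearMap.adjoint (S s) w))) (Set.Ioi (0:ℝ)) volume
    · -- integrable case
      have hiq : ⟪(∫ s in Set.Ioi (0:ℝ), S s (Q (ContinuousLinearMap.adjoint (S s) w))), w⟫
          = ∫ s in Set.Ioi (0:ℝ), ⟪S s (Q (ContinuousLinearMap.adjoint (S s) w)), w⟫ := by
        rw [real_inner_comm, ← integral_inner (𝕜 := ℝ) hInt w]
        exact integral_congr_ae (Filter.Eventually.of_forall fun s => by exact real_inner_comm _ _)
      have hnn : 0 ≤ᵐ[volume.restrict (Set.Ioi (0:ℝ))]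
          fun s => ⟪S s (Q (ContinuousLinearMap.adjoint (S s) w)), w⟫ := by
        filter_upwards with s
        rw [hpt s w]
        positivity
      have hmeas : AEStronglyMeasurable
          (fun s => ⟪S s (Q (ContinuousLinearMap.adjoint (S s) w)), w⟫)
          (volume.restrict (Set.Ioi (0:ℝ))) :=
        hInt.aestronglyMeasurable.inner aestronglyMeasurable_const
      have hlb : (∫⁻ s in Set.Ioi (0:ℝ),
            ENNReal.ofReal ⟪S s (Q (ContinuousLinearMap.adjoint (S s) w)), w⟫)
          ≤ (‖z‖₊ : ℝ≥0∞) ^ 2 * ∫⁻ u in Set.Ioi ((n:ℝ)), g u := by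
        calc (∫⁻ s in Set.Ioi (0:ℝ),
              ENNReal.ofReal ⟪S s (Q (ContinuousLinearMap.adjoint (S s) w)), w⟫)
            ≤ ∫⁻ s in Set.Ioi (0:ℝ), (‖z‖₊ : ℝ≥0∞) ^ 2 * g ((n:ℝ) + s) := by
              apply lintegral_mono_ae
              filter_upwards [ae_restrict_mem measurableSet_Ioi] with s hs
              rw [hpt s w]
              have hws : ContinuousLinearMap.adjoint (S s) w
                  = ContinuousLinearMap.adjoint (S ((n:ℝ) + s)) z := by
                rw [hSadd (n:ℝ) s (Nat.cast_nonneg n) (le_of_lt hs),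
                  ContinuousLinearMap.adjoint_comp, ContinuousLinearMap.comp_apply, hw]
              rw [hws]
              have h1 := HS (sqrtQ.comp (ContinuousLinearMap.adjoint (S ((n:ℝ) + s)))) z
              simp only [ContinuousLinearMap.comp_apply] at h1
              rw [ENNReal.ofReal_pow (norm_nonneg _), ofReal_norm, enorm_eq_nnnorm]
              exact h1
          _ = (‖z‖₊ : ℝ≥0∞) ^ 2 * ∫⁻ s in Set.Ioi (0:ℝ), g ((n:ℝ) + s) :=
              lintegral_const_mul' _ _ (ENNReal.pow_ne_top ENNReal.coe_ne_top)
          _ = (‖z‖₊ : ℝ≥0∞) ^ 2 * ∫⁻ u in Set.Ioi ((n:ℝ)), g u := by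
              rw [aux_translate g (n:ℝ)]
      -- put it together
      have hRw2 : ‖R w‖ ^ 2 ≤ ‖z‖ ^ 2 * (∫⁻ u in Set.Ioi ((n:ℝ)), g u).toReal := by
        rw [hstep2, hiq, integral_eq_lintegral_of_nonneg_ae hnn hmeas]
        have hne : ((‖z‖₊ : ℝ≥0∞) ^ 2 * ∫⁻ u in Set.Ioi ((n:ℝ)), g u) ≠ ⊤ :=
          ENNReal.mul_ne_top (ENNReal.pow_ne_top ENNReal.coe_ne_top) htail_ne
        calc (∫⁻ s in Set.Ioi (0:ℝ),
              ENNReal.ofReal ⟪S s (Q (ContinuousLinearMap.adjoint (S s) w)), w⟫).toReal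
            ≤ ((‖z‖₊ : ℝ≥0∞) ^ 2 * ∫⁻ u in Set.Ioi ((n:ℝ)), g u).toReal :=
              ENNReal.toReal_mono hne hlb
          _ = ‖z‖ ^ 2 * (∫⁻ u in Set.Ioi ((n:ℝ)), g u).toReal := by
              rw [ENNReal.toReal_mul, ENNReal.toReal_pow, ENNReal.coe_toReal, coe_nnnorm]
      -- conclude
      set τ : ℝ := (∫⁻ u in Set.Ioi ((n:ℝ)), g u).toReal with hτ
      have h4 : ‖z‖ ^ 2 * ‖z‖ ^ 2 ≤ (τ * ‖x‖ ^ 2) * ‖z‖ ^ 2 := by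
        have h5 : (‖z‖ ^ 2) ^ 2 ≤ (‖x‖ * ‖R w‖) ^ 2 :=
          pow_le_pow_left₀ (by positivity) hstep1 2
        calc ‖z‖ ^ 2 * ‖z‖ ^ 2 = (‖z‖ ^ 2) ^ 2 := by ring
          _ ≤ (‖x‖ * ‖R w‖) ^ 2 := h5
          _ = ‖x‖ ^ 2 * ‖R w‖ ^ 2 := by ring
          _ ≤ ‖x‖ ^ 2 * (‖z‖ ^ 2 * τ) := by gcongr
          _ = (τ * ‖x‖ ^ 2) * ‖z‖ ^ 2 := by ring
      have h6 : ‖z‖ ^ 2 / ‖x‖ ^ 2 ≤ τ := by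
        rw [div_le_iff₀ (by positivity)]
        calc ‖z‖ ^ 2 ≤ τ * ‖x‖ ^ 2 := le_of_mul_le_mul_right h4 (by positivity)
          _ = τ * ‖x‖ ^ 2 := rfl
      exact ENNReal.ofReal_le_of_le_toReal h6
    · -- non-integrable case : the integral is zero
      exfalso
      have h0 : (∫ s in Set.Ioi (0:ℝ), S s (Q (ContinuousLinearMap.adjoint (S s) w))) = 0 :=
        integral_undef hInt
      rw [h0, inner_zero_left] at hstep2
      have hRw0 : ‖R w‖ = 0 := by
        have := hstep2
        nlinarith [norm_nonneg (R w)]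
      nlinarith [hstep1, hzn, hRw0]
  · -- part (b)
    intro x hx
    have hQx : sqrtQ x = 0 := by
      by_contra hne
      have hxne : x ≠ 0 := by
        rintro rfl
        simp at hne
      have hbound : ∀ s ∈ Set.Ioi (0:ℝ), ((‖sqrtQ x‖₊ : ℝ≥0∞)) ^ 2 ≤ (‖x‖₊ : ℝ≥0∞) ^ 2 * g s := by
        intro s hs
        have h1 := HS (sqrtQ.comp (ContinuousLinearMap.adjoint (S s))) x
        simp only [ContinuousLinearMap.comp_apply] at h1
        rwa [hx s (le_of_lt hs)] at h1
      have htop : (⊤:ℝ≥0∞) ≤ (‖x‖₊ : ℝ≥0∞) ^ 2 * ∫⁻ s in Set.Ioi (0:ℝ), g s := by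
        calc (⊤:ℝ≥0∞) = ((‖sqrtQ x‖₊ : ℝ≥0∞) ^ 2) * volume (Set.Ioi (0:ℝ)) := by
              rw [Real.volume_Ioi, ENNReal.mul_top]
              simp [hne]
          _ = ∫⁻ _ in Set.Ioi (0:ℝ), ((‖sqrtQ x‖₊ : ℝ≥0∞) ^ 2) := (setLIntegral_const _ _).symm
          _ ≤ ∫⁻ s in Set.Ioi (0:ℝ), (‖x‖₊ : ℝ≥0∞) ^ 2 * g s := by
              apply lintegral_mono_ae
              filter_upwards [ae_restrict_mem measurableSet_Ioi] with s hs
              exact hbound s hs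
          _ = (‖x‖₊ : ℝ≥0∞) ^ 2 * ∫⁻ s in Set.Ioi (0:ℝ), g s :=
              lintegral_const_mul' _ _ (ENNReal.pow_ne_top ENNReal.coe_ne_top)
      have hfin : (‖x‖₊ : ℝ≥0∞) ^ 2 * (∫⁻ s in Set.Ioi (0:ℝ), g s) < ⊤ :=
        ENNReal.mul_lt_top (ENNReal.pow_lt_top ENNReal.coe_lt_top) hintg
      exact absurd (lt_of_le_of_lt htop hfin) (lt_irrefl _)
    have hQx0 : Q x = 0 := by
      rw [← hsqrt_sq]
      simp only [ContinuousLinearMap.comp_apply, hQx, map_zero]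
    apply hinj0
    have heq : Set.EqOn (fun s => S s (Q (ContinuousLinearMap.adjoint (S s) x)))
        (fun _ => (0:H)) (Set.Ioi (0:ℝ)) := by
      intro s hs
      simp only
      rw [hx s (le_of_lt hs), hQx0, map_zero]
    rw [setIntegral_congr_fun measurableSet_Ioi heq, integral_zero]
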